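/- Let H be a real inner product space of finite dimension n ≥ 1, let N ≥ 2, let K be a positive semidefinite bounded linear operator on H, and let (F,G) be an (N,n) K-dual pair that is 1-uniform, i.e., ⟨f_i, g_i⟩ = tr(K)/N for all i. Set μ = tr(K²) − (tr K)²/N. If μ ≥ 0, then max_{i≠j} e_{ij}(F,G) ≥ tr(K)/N + √( μ / (N(N−1)) ); if μ < 0, then max_{i≠j} e_{ij}(F,G) ≥ √( (tr(K)/N)² − μ/(N(N−1)) ). -/

import Mathlib

local notation "⟪" x ", " y "⟫" => @inner ℝ _ _ x y

/-- The two-erasure error quantity `e_{ij}(F,G)`: with `t = tr(K)/N` and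
`c = ⟨g_i, f_j⟩·⟨g_j, f_i⟩`, it equals `t + √c` when `c ≥ 0` and `√(t² − c)` when `c < 0`. -/
noncomputable def eErr (t c : ℝ) : ℝ :=
  if 0 ≤ c then t + Real.sqrt c else Real.sqrt (t ^ 2 - c)

lemma trace_eq_sum_inner' {H : Type*} [NormedAddCommGroup H] [InnerProductSpace ℝ H]
    [FiniteDimensional ℝ H] {ι : Type*} [Fintype ι] [DecidableEq ι]
    (b : OrthonormalBasis ι ℝ H)
    (T : H →ₗ[ℝ] H) : LinearMap.trace ℝ H T = ∑ i, ⟪b i, T (b i)⟫ := by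
  rw [LinearMap.trace_eq_matrix_trace ℝ b.toBasis, Matrix.trace]
  congr 1
  ext i
  rw [Matrix.diag_apply, LinearMap.toMatrix_apply, b.coe_toBasis_repr_apply,
    b.repr_apply_apply, b.coe_toBasis]

/-- real Hilbert space, `N ≥ 2`, `K` positive semidefinite, `(F, G)` a 1-uniform
`(N, n)` `K`-dual pair; with `μ = tr(K²) − (tr K)²/N`: if `μ ≥ 0` then
`max_{i≠j} e_{ij}(F,G) ≥ tr(K)/N + √(μ/(N(N−1)))`, and if `μ < 0` then
`max_{i≠j} e_{ij}(F,G) ≥ √((tr(K)/N)² − μ/(N(N−1)))`. -/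
theorem stmt8
    {H : Type*} [NormedAddCommGroup H] [InnerProductSpace ℝ H] [FiniteDimensional ℝ H]
    (hdim : 1 ≤ Module.finrank ℝ H)
    {N : ℕ} (hN : 2 ≤ N)
    (K : H →L[ℝ] H) (hKsa : IsSelfAdjoint K) (hK : ∀ f : H, 0 ≤ ⟪K f, f⟫)
    (F G : Fin N → H)
    (hdual : ∀ f : H, K f = ∑ i, ⟪G i, f⟫ • F i)
    (huni : ∀ i, ⟪G i, F i⟫ = LinearMap.trace ℝ H (K : H →ₗ[ℝ] H) / N)
    (μ : ℝ)
    (hμ : μ = LinearMap.trace ℝ H ((K ∘L K : H →L[ℝ] H) : H →ₗ[ℝ] H) -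
          (LinearMap.trace ℝ H (K : H →ₗ[ℝ] H)) ^ 2 / N) :
    (0 ≤ μ →
      LinearMap.trace ℝ H (K : H →ₗ[ℝ] H) / N + Real.sqrt (μ / (N * (N - 1))) ≤
        ⨆ p : {p : Fin N × Fin N // p.1 ≠ p.2},
          eErr (LinearMap.trace ℝ H (K : H →ₗ[ℝ] H) / N)
            (⟪G p.1.1, F p.1.2⟫ * ⟪G p.1.2, F p.1.1⟫)) ∧
    (μ < 0 →
      Real.sqrt ((LinearMap.trace ℝ H (K : H →ₗ[ℝ] H) / N) ^ 2 - μ / (N * (N - 1))) ≤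
        ⨆ p : {p : Fin N × Fin N // p.1 ≠ p.2},
          eErr (LinearMap.trace ℝ H (K : H →ₗ[ℝ] H) / N)
            (⟪G p.1.1, F p.1.2⟫ * ⟪G p.1.2, F p.1.1⟫)) := by
  classical
  set t : ℝ := LinearMap.trace ℝ H (K : H →ₗ[ℝ] H) / N with ht
  set c : Fin N × Fin N → ℝ := fun p => ⟪G p.1, F p.2⟫ * ⟪G p.2, F p.1⟫ with hc
  have hsym : ∀ x y : H, ⟪K x, y⟫ = ⟪x, K y⟫ := hKsa.isSymmetric
  have hNpos : (0 : ℝ) < N := by positivity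
  -- trace of K² as double sum
  have htr2 : LinearMap.trace ℝ H ((K ∘L K : H →L[ℝ] H) : H →ₗ[ℝ] H)
      = ∑ i, ∑ j, ⟪G j, F i⟫ * ⟪G i, F j⟫ := by
    let b := stdOrthonormalBasis ℝ H
    rw [trace_eq_sum_inner' b]
    have step1 : ∀ k, ⟪b k, ((K ∘L K : H →L[ℝ] H) : H →ₗ[ℝ] H) (b k)⟫
        = ∑ i, ⟪K (G i), b k⟫ * ⟪b k, F i⟫ := by
      intro k
      have : ((K ∘L K : H →L[ℝ] H) : H →ₗ[ℝ] H) (b k) = ∑ i, ⟪G i, K (b k)⟫ • F i := by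
        simpa using hdual (K (b k))
      rw [this, inner_sum]
      refine Finset.sum_congr rfl fun i _ => ?_
      rw [real_inner_smul_right, hsym (G i) (b k)]
    rw [Finset.sum_congr rfl fun k _ => step1 k, Finset.sum_comm]
    refine Finset.sum_congr rfl fun i _ => ?_
    rw [b.sum_inner_mul_inner (K (G i)) (F i), hsym (G i) (F i), hdual (F i), inner_sum]
    refine Finset.sum_congr rfl fun j _ => ?_
    rw [real_inner_smul_right]
  -- diagonal as an image
  have hdiagset : Finset.univ.filter (fun p : Fin N × Fin N => p.1 = p.2)
      = Finset.univ.image (fun i : Fin N => (i, i)) := by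
    ext ⟨a, b⟩
    simp only [Finset.mem_filter, Finset.mem_univ, true_and, Finset.mem_image, Prod.ext_iff]
    constructor
    · rintro rfl; exact ⟨a, rfl, rfl⟩
    · rintro ⟨i, rfl, rfl⟩; rfl
  have hdiaginj : Function.Injective (fun i : Fin N => ((i, i) : Fin N × Fin N)) := by
    intro a b h; exact (Prod.ext_iff.mp h).1
  have hdc : (Finset.univ.filter (fun p : Fin N × Fin N => p.1 = p.2)).card = N := by
    rw [hdiagset, Finset.card_image_of_injective _ hdiaginj, Finset.card_univ, Fintype.card_fin]
  -- the off-diagonal finset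
  set s : Finset (Fin N × Fin N) := Finset.univ.filter (fun p => p.1 ≠ p.2) with hs
  have hcard : (s.card : ℝ) = N * (N - 1) := by
    have h := Finset.card_filter_add_card_filter_not
      (s := (Finset.univ : Finset (Fin N × Fin N))) (p := fun p => p.1 ≠ p.2)
    simp only [not_not] at h
    rw [hdc, Finset.card_univ, Fintype.card_prod, Fintype.card_fin, ← hs] at h
    have hR : (s.card : ℝ) + N = N * N := by exact_mod_cast congrArg Nat.cast h
    linarith [hR, sq_nonneg ((N : ℝ))]
  have hxne : ((N : ℝ) * (N - 1)) ≠ 0 := by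
    have h2 : (2 : ℝ) ≤ N := by exact_mod_cast hN
    have : (0:ℝ) < (N : ℝ) * (N - 1) := by nlinarith
    exact this.ne'
  have hcardpos : (0:ℝ) < (s.card : ℝ) := by
    rw [hcard]
    have h2 : (2 : ℝ) ≤ N := by exact_mod_cast hN
    nlinarith
  have hsum : ∑ p ∈ s, c p = μ := by
    have hall : ∑ p : Fin N × Fin N, c p = ∑ i, ∑ j, ⟪G j, F i⟫ * ⟪G i, F j⟫ := by
      rw [Fintype.sum_prod_type]
      exact Finset.sum_congr rfl fun i _ => Finset.sum_congr rfl fun j _ => mul_comm _ _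
    have hdiag : ∑ p ∈ Finset.univ.filter (fun p : Fin N × Fin N => p.1 = p.2), c p
        = (LinearMap.trace ℝ H (K : H →ₗ[ℝ] H)) ^ 2 / N := by
      rw [hdiagset, Finset.sum_image (fun a _ b _ h => hdiaginj h)]
      have hterm : ∀ i : Fin N, c (i, i) = t ^ 2 := by
        intro i; simp only [hc]; rw [huni i]; ring
      rw [Finset.sum_congr rfl fun i _ => hterm i, Finset.sum_const, Finset.card_univ,
        Fintype.card_fin, nsmul_eq_mul, ht]
      field_simp
    have hsplit : ∑ p : Fin N × Fin N, c p
        = ∑ p ∈ s, c p + ∑ p ∈ Finset.univ.filter (fun p : Fin N × Fin N => p.1 = p.2), c p := by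
      rw [hs, ← Finset.sum_filter_add_sum_filter_not Finset.univ
        (fun p : Fin N × Fin N => p.1 ≠ p.2) c]
      simp
    rw [hall, htr2.symm] at hsplit
    rw [hμ, hsplit, hdiag]
    ring
  have hsne : s.Nonempty := by
    refine ⟨(⟨0, by omega⟩, ⟨1, by omega⟩), ?_⟩
    simp [hs, Fin.ext_iff]
  -- boundedness of the sup family
  have hbdd : BddAbove (Set.range fun p : {p : Fin N × Fin N // p.1 ≠ p.2} =>
      eErr t (c p.1)) := Set.Finite.bddAbove (Set.finite_range _)
  set m : ℝ := μ / (N * (N - 1)) with hm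
  have hmcard : m * s.card = μ := by
    rw [hm, hcard, div_mul_cancel₀ _ hxne]
  constructor
  · intro hμ0
    have hm0 : 0 ≤ m := by
      rw [hm]
      apply div_nonneg hμ0
      rw [← hcard]; exact hcardpos.le
    obtain ⟨p, hps, hpc⟩ : ∃ p ∈ s, m ≤ c p := by
      by_contra h
      push_neg at h
      have : ∑ p ∈ s, c p < ∑ p ∈ s, m := Finset.sum_lt_sum_of_nonempty hsne h
      rw [hsum, Finset.sum_const, nsmul_eq_mul, mul_comm, hmcard] at this
      exact lt_irrefl _ this
    have hpne : p.1 ≠ p.2 := by simpa [hs] using hps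
    have hle : t + Real.sqrt m ≤ eErr t (c p) := by
      rw [eErr, if_pos (hm0.trans hpc)]
      exact add_le_add_right (Real.sqrt_le_sqrt hpc) t
    exact hle.trans (le_ciSup hbdd ⟨p, hpne⟩)
  · intro hμ0
    have hm0 : m < 0 := by
      rw [hm]
      apply div_neg_of_neg_of_pos hμ0
      rw [← hcard]; exact hcardpos
    obtain ⟨p, hps, hpc⟩ : ∃ p ∈ s, c p ≤ m := by
      by_contra h
      push_neg at h
      have : ∑ p ∈ s, m < ∑ p ∈ s, c p := Finset.sum_lt_sum_of_nonempty hsne h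
      rw [hsum, Finset.sum_const, nsmul_eq_mul, mul_comm, hmcard] at this
      exact lt_irrefl _ this
    have hpne : p.1 ≠ p.2 := by simpa [hs] using hps
    have hle : Real.sqrt (t ^ 2 - m) ≤ eErr t (c p) := by
      rw [eErr, if_neg (by linarith [hpc.trans_lt hm0] : ¬ 0 ≤ c p)]
      exact Real.sqrt_le_sqrt (by linarith)
    exact hle.trans (le_ciSup hbdd ⟨p, hpne⟩)
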